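/- Let X and X' be i.i.d. random variables taking values in {0, 1, ..., m} for some integer m ≥ 1. Then for all real t with |t| ≤ π, |E[e^{−itX}]|² ≤ 1 − (1/4)·P[X = 1]·P[X = 0]·t². -/

import Mathlib

open MeasureTheory ProbabilityTheory Real Complex
open scoped ProbabilityTheory

lemma integral_comp_eq_sum_aux {Ω : Type*} [MeasureSpace Ω] [IsProbabilityMeasure (ℙ : Measure Ω)]
    (m : ℕ) (X : Ω → ℕ) (hX : Measurable X) (hrange : ∀ ω, X ω ≤ m) (f : ℕ → ℂ) :
    ∫ ω, f (X ω) = ∑ k ∈ Finset.range (m+1), (ℙ {ω | X ω = k}).toReal • f k := by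
  have hmeas : ∀ k : ℕ, MeasurableSet {ω | X ω = k} := fun k => hX (measurableSet_singleton k)
  have hfun : (fun ω => f (X ω)) = fun ω => ∑ k ∈ Finset.range (m+1),
      Set.indicator {ω | X ω = k} (fun _ => f k) ω := by
    funext ω
    rw [Finset.sum_eq_single (X ω)]
    · simp [Set.indicator_of_mem, Set.mem_setOf_eq]
    · intro b _ hb
      exact Set.indicator_of_notMem (fun h => hb (Eq.symm h)) _
    · intro h; exact absurd (Finset.mem_range.2 (Nat.lt_succ_of_le (hrange ω))) h
  rw [hfun, integral_finset_sum]
  · exact Finset.sum_congr rfl fun k _ => by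
      rw [integral_indicator_const _ (hmeas k), measureReal_def]
  · exact fun k _ => (integrable_const (f k)).indicator (hmeas k)

lemma sum_probs_eq_one {Ω : Type*} [MeasureSpace Ω] [IsProbabilityMeasure (ℙ : Measure Ω)]
    (m : ℕ) (X : Ω → ℕ) (hX : Measurable X) (hrange : ∀ ω, X ω ≤ m) :
    ∑ k ∈ Finset.range (m+1), (ℙ {ω | X ω = k}).toReal = 1 := by
  have hmeas : ∀ k : ℕ, MeasurableSet {ω | X ω = k} := fun k => hX (measurableSet_singleton k)
  have hdisj : (↑(Finset.range (m+1)) : Set ℕ).PairwiseDisjoint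
      (fun k => {ω | X ω = k}) := by
    intro i _ j _ hij
    refine Set.disjoint_left.2 fun ω hi hj => hij ?_
    simp only [Set.mem_setOf_eq] at hi hj
    rw [← hi, ← hj]
  have hunion : (⋃ k ∈ Finset.range (m+1), {ω | X ω = k}) = Set.univ := by
    ext ω
    simp only [Set.mem_iUnion, Set.mem_setOf_eq, Set.mem_univ, iff_true, Finset.mem_range]
    exact ⟨X ω, Nat.lt_succ_of_le (hrange ω), rfl⟩
  have h1 : ∑ k ∈ Finset.range (m+1), ℙ {ω | X ω = k} = 1 := by
    rw [← measure_biUnion_finset hdisj (fun k _ => hmeas k), hunion, measure_univ]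
  rw [← ENNReal.toReal_sum (fun k _ => measure_ne_top _ _), h1, ENNReal.toReal_one]

theorem stmt2 {Ω : Type*} [MeasureSpace Ω] [IsProbabilityMeasure (ℙ : Measure Ω)]
    (m : ℕ) (hm : 1 ≤ m) (X X' : Ω → ℕ) (hX : Measurable X) (hX' : Measurable X')
    (hrange : ∀ ω, X ω ≤ m) (hrange' : ∀ ω, X' ω ≤ m)
    (hindep : IndepFun X X' ℙ)
    (hident : ∀ k : ℕ, ℙ {ω | X ω = k} = ℙ {ω | X' ω = k}) :
    ∀ t : ℝ, |t| ≤ Real.pi →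
      ‖∫ ω, Complex.exp (-(Complex.I * t * X ω))‖ ^ 2
        ≤ 1 - (1 / 4) * (ℙ {ω | X ω = 1}).toReal * (ℙ {ω | X ω = 0}).toReal * t ^ 2 := by
  intro t ht
  set p : ℕ → ℝ := fun k => (ℙ {ω | X ω = k}).toReal with hp
  have hpnn : ∀ k, 0 ≤ p k := fun k => ENNReal.toReal_nonneg
  have hsum : ∑ k ∈ Finset.range (m+1), p k = 1 := sum_probs_eq_one m X hX hrange
  set s := Finset.range (m+1) with hs
  -- rewrite the integral
  have hint : (∫ ω, Complex.exp (-(Complex.I * t * X ω)))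
      = ∑ k ∈ s, (p k : ℂ) * Complex.exp ((-(t * (k:ℝ)) : ℝ) * Complex.I) := by
    have := integral_comp_eq_sum_aux m X hX hrange
      (fun k => Complex.exp ((-(t * (k:ℝ)) : ℝ) * Complex.I))
    rw [show (fun ω => Complex.exp (-(Complex.I * t * X ω)))
        = fun ω => (fun k => Complex.exp ((-(t * (k:ℝ)) : ℝ) * Complex.I)) (X ω) from ?_]
    · rw [this]
      exact Finset.sum_congr rfl fun k _ => by rw [Complex.real_smul]
    · funext ω; congr 1; push_cast; ring
  set z : ℂ := ∑ k ∈ s, (p k : ℂ) * Complex.exp ((-(t * (k:ℝ)) : ℝ) * Complex.I) with hz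
  rw [hint]
  -- norm squared as a double sum of cosines
  have hnormsq : ‖z‖ ^ 2 = ∑ j ∈ s, ∑ k ∈ s, p j * p k * Real.cos (t * k - t * j) := by
    have hconj : (starRingEnd ℂ) z
        = ∑ k ∈ s, (p k : ℂ) * Complex.exp (((t * (k:ℝ)) : ℝ) * Complex.I) := by
      rw [hz, map_sum]
      refine Finset.sum_congr rfl fun k _ => ?_
      rw [map_mul, Complex.conj_ofReal, ← Complex.exp_conj]
      congr 1
      simp [Complex.ext_iff]
    have hmul : z * (starRingEnd ℂ) z
        = ∑ j ∈ s, ∑ k ∈ s,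
          ((p j * p k : ℝ) : ℂ) * Complex.exp (((t * k - t * j : ℝ)) * Complex.I) := by
      rw [hconj, hz, Finset.sum_mul_sum]
      refine Finset.sum_congr rfl fun j _ => Finset.sum_congr rfl fun k _ => ?_
      rw [mul_mul_mul_comm, ← Complex.exp_add]
      push_cast
      ring_nf
    have h1 : ‖z‖ ^ 2 = (z * (starRingEnd ℂ) z).re := by
      rw [Complex.mul_conj]
      simp [Complex.sq_norm]
    rw [h1, hmul, Complex.re_sum]
    refine Finset.sum_congr rfl fun j _ => ?_
    rw [Complex.re_sum]
    refine Finset.sum_congr rfl fun k _ => ?_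
    rw [Complex.re_ofReal_mul, Complex.exp_ofReal_mul_I_re]
  rw [hnormsq]
  -- the deficit sum
  have key : ∑ j ∈ s, ∑ k ∈ s, p j * p k * Real.cos (t * k - t * j)
      = 1 - ∑ j ∈ s, ∑ k ∈ s, p j * p k * (1 - Real.cos (t * k - t * j)) := by
    have hprod : ∑ j ∈ s, ∑ k ∈ s, p j * p k = 1 := by
      rw [← Finset.sum_mul_sum, hsum, one_mul]
    have hsplit : ∑ j ∈ s, ∑ k ∈ s, p j * p k * (1 - Real.cos (t * k - t * j))
        = (∑ j ∈ s, ∑ k ∈ s, p j * p k)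
          - ∑ j ∈ s, ∑ k ∈ s, p j * p k * Real.cos (t * k - t * j) := by
      rw [← Finset.sum_sub_distrib]
      refine Finset.sum_congr rfl fun j _ => ?_
      rw [← Finset.sum_sub_distrib]
      exact Finset.sum_congr rfl fun k _ => by ring
    rw [hsplit, hprod]
    ring
  rw [key]
  -- lower bound the deficit sum by the two terms (0,1) and (1,0)
  have hdef : 2 * (p 0 * p 1) * (1 - Real.cos t)
      ≤ ∑ j ∈ s, ∑ k ∈ s, p j * p k * (1 - Real.cos (t * k - t * j)) := by
    rw [← Finset.sum_product']
    have hsub : ({((0:ℕ),(1:ℕ)), ((1:ℕ),(0:ℕ))} : Finset (ℕ × ℕ)) ⊆ s ×ˢ s := by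
      have h0 : (0:ℕ) ∈ s := Finset.mem_range.2 (Nat.succ_pos m)
      have h1s : (1:ℕ) ∈ s := Finset.mem_range.2 (by omega)
      intro x hx
      simp only [Finset.mem_insert, Finset.mem_singleton] at hx
      rcases hx with rfl | rfl <;> exact Finset.mem_product.2 ⟨by assumption, by assumption⟩
    have hterm : ∑ x ∈ ({((0:ℕ),(1:ℕ)), ((1:ℕ),(0:ℕ))} : Finset (ℕ × ℕ)),
        p x.1 * p x.2 * (1 - Real.cos (t * x.2 - t * x.1))
        = 2 * (p 0 * p 1) * (1 - Real.cos t) := by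
      rw [Finset.sum_pair (by simp)]
      simp only [Nat.cast_zero, Nat.cast_one, mul_zero, mul_one, zero_sub, sub_zero]
      rw [Real.cos_neg]
      ring
    rw [← hterm]
    refine Finset.sum_le_sum_of_subset_of_nonneg hsub fun x _ _ => ?_
    refine mul_nonneg (mul_nonneg (hpnn x.1) (hpnn x.2)) ?_
    linarith [Real.cos_le_one (t * x.2 - t * x.1)]
  -- cosine quadratic bound
  have hcos : 2 / Real.pi ^ 2 * t ^ 2 ≤ 1 - Real.cos t := by
    have := Real.cos_le_one_sub_mul_cos_sq ht
    linarith
  have hpi : Real.pi ≤ 4 := Real.pi_le_four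
  have hpipos : 0 < Real.pi := Real.pi_pos
  have hp0 := hpnn 0
  have hp1 := hpnn 1
  have ht2 : (0:ℝ) ≤ t ^ 2 := sq_nonneg t
  have h4 : 1 / 4 * t ^ 2 ≤ 2 * (2 / Real.pi ^ 2 * t ^ 2) := by
    have hsq : Real.pi ^ 2 ≤ 16 := by nlinarith
    have h : (1:ℝ) / 4 ≤ 4 / Real.pi ^ 2 := by
      rw [le_div_iff₀ (by positivity)]
      linarith
    calc 1 / 4 * t ^ 2 ≤ 4 / Real.pi ^ 2 * t ^ 2 :=
          mul_le_mul_of_nonneg_right h ht2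
      _ = 2 * (2 / Real.pi ^ 2 * t ^ 2) := by ring
  have hfinal : 1 / 4 * (p 1 * p 0) * t ^ 2 ≤ 2 * (p 0 * p 1) * (1 - Real.cos t) := by
    calc 1 / 4 * (p 1 * p 0) * t ^ 2 = (p 0 * p 1) * (1 / 4 * t ^ 2) := by ring
    _ ≤ (p 0 * p 1) * (2 * (2 / Real.pi ^ 2 * t ^ 2)) := by
        refine mul_le_mul_of_nonneg_left h4 (by positivity)
    _ ≤ (p 0 * p 1) * (2 * (1 - Real.cos t)) := by
        refine mul_le_mul_of_nonneg_left (by linarith) (by positivity)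
    _ = 2 * (p 0 * p 1) * (1 - Real.cos t) := by ring
  have : 1 / 4 * p 1 * p 0 * t ^ 2 = 1 / 4 * (p 1 * p 0) * t ^ 2 := by ring
  linarith [hdef, hfinal]
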